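/- In a convex bounded dual configuration, the rows and columns touched by distinct black islands are pairwise disjoint: if two distinct islands of the decomposition both contain a cell in the same row (or the same column), they are in fact the same island. -/

import Mathlib

/-- The four von Neumann neighbors of a cell of the plane. -/
def nbrsZ (p : ℤ × ℤ) : List (ℤ × ℤ) :=
  [(p.1 + 1, p.2), (p.1 - 1, p.2), (p.1, p.2 + 1), (p.1, p.2 - 1)]

/-- A set of cells is convex if it is closed under taking horizontal and vertical
segments between its cells. -/
def IsConvexCells (R : Set (ℤ × ℤ)) : Prop :=
  (∀ a b j : ℤ, (a, j) ∈ R → (b, j) ∈ R → ∀ l, a ≤ l → l ≤ b → (l, j) ∈ R) ∧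
  (∀ i a b : ℤ, (i, a) ∈ R → (i, b) ∈ R → ∀ l, a ≤ l → l ≤ b → (i, l) ∈ R)

/-- Two cells of a set are connected if they are joined by a path of adjacent cells
staying in the set. -/
def ConnIn (R : Set (ℤ × ℤ)) (p q : ℤ × ℤ) : Prop :=
  Relation.ReflTransGen (fun a b => a ∈ R ∧ b ∈ R ∧ b ∈ nbrsZ a) p q

/-- A set is connected (for the von Neumann adjacency) if any two of its cells are
joined by a path inside it. -/
def IsConnCells (R : Set (ℤ × ℤ)) : Prop :=
  ∀ p ∈ R, ∀ q ∈ R, ConnIn R p q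

lemma nbrsZ_symm {p q : ℤ × ℤ} (h : q ∈ nbrsZ p) : p ∈ nbrsZ q := by
  obtain ⟨p1, p2⟩ := p; obtain ⟨q1, q2⟩ := q
  simp [nbrsZ, Prod.ext_iff] at h ⊢
  omega

lemma connIn_symm {R : Set (ℤ × ℤ)} {p q : ℤ × ℤ} (h : ConnIn R p q) : ConnIn R q p := by
  induction h with
  | refl => exact Relation.ReflTransGen.refl
  | tail _ hstep ih =>
    exact Relation.ReflTransGen.trans
      (Relation.ReflTransGen.single ⟨hstep.2.1, hstep.1, nbrsZ_symm hstep.2.2⟩) ih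

lemma seg_vert (B : Set (ℤ × ℤ)) (i a : ℤ) (n : ℕ)
    (h : ∀ l, a ≤ l → l ≤ a + n → (i, l) ∈ B) : ConnIn B (i, a) (i, a + n) := by
  induction n with
  | zero => simp only [Nat.cast_zero, add_zero]; exact Relation.ReflTransGen.refl
  | succ k ih =>
    have h1 : ConnIn B (i, a) (i, a + k) :=
      ih (fun l hl1 hl2 => h l hl1 (by push_cast; omega))
    refine h1.tail ⟨h (a + k) (by omega) (by push_cast; omega),
      h (a + (k + 1 : ℕ)) (by omega) (by push_cast; omega), ?_⟩
    simp [nbrsZ, Prod.ext_iff]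
    push_cast
    omega

lemma seg_horiz (B : Set (ℤ × ℤ)) (j a : ℤ) (n : ℕ)
    (h : ∀ l, a ≤ l → l ≤ a + n → (l, j) ∈ B) : ConnIn B (a, j) (a + n, j) := by
  induction n with
  | zero => simp only [Nat.cast_zero, add_zero]; exact Relation.ReflTransGen.refl
  | succ k ih =>
    have h1 : ConnIn B (a, j) (a + k, j) :=
      ih (fun l hl1 hl2 => h l hl1 (by push_cast; omega))
    refine h1.tail ⟨h (a + k) (by omega) (by push_cast; omega),
      h (a + (k + 1 : ℕ)) (by omega) (by push_cast; omega), ?_⟩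
    simp [nbrsZ, Prod.ext_iff]
    push_cast
    omega

/-- In a finite convex set of black cells, the rows and columns touched by distinct
islands are pairwise disjoint: two cells of the set lying in the same row or in the
same column belong to the same island (connected component). -/
theorem stmt16 (B : Set (ℤ × ℤ)) (hfin : B.Finite) (hconv : IsConvexCells B)
    (p q : ℤ × ℤ) (hp : p ∈ B) (hq : q ∈ B) (h : p.1 = q.1 ∨ p.2 = q.2) :
    ConnIn B p q := by
  obtain ⟨p1, p2⟩ := p
  obtain ⟨q1, q2⟩ := q
  rcases h with h | h
  · simp only at h; subst h
    rcases le_total p2 q2 with hle | hle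
    · obtain ⟨n, hn⟩ := Int.le.dest hle
      subst hn
      exact seg_vert B p1 p2 n (fun l h1 h2 => hconv.2 p1 p2 _ hp hq l h1 h2)
    · obtain ⟨n, hn⟩ := Int.le.dest hle
      subst hn
      exact connIn_symm (seg_vert B p1 q2 n (fun l h1 h2 => hconv.2 p1 q2 _ hq hp l h1 h2))
  · simp only at h; subst h
    rcases le_total p1 q1 with hle | hle
    · obtain ⟨n, hn⟩ := Int.le.dest hle
      subst hn
      exact seg_horiz B p2 p1 n (fun l h1 h2 => hconv.1 p1 _ p2 hp hq l h1 h2)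
    · obtain ⟨n, hn⟩ := Int.le.dest hle
      subst hn
      exact connIn_symm (seg_horiz B p2 q1 n (fun l h1 h2 => hconv.1 q1 _ p2 hq hp l h1 h2))
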